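/- (Stable upper genus of PSL(2,𝔽₇) is 399.) (a) There do not exist natural numbers h, a₂, a₃, a₄, a₇ such that, as integers, 398 = 1 + 168(h−1) + 42a₂ + 56a₃ + 63a₄ + 72a₇ (equivalently, 168h + 42a₂ + 56a₃ + 63a₄ + 72a₇ = 565 has no solution in natural numbers); consequently PSL(2,𝔽₇) admits no generating vector realizing genus 398. (b) For every integer g ≥ 399 there exist natural numbers h, a₂, a₃, a₄, a₇ with (h, a₂, a₃, a₄, a₇) ≠ (1, 1, 0, 0, 0) such that g = 1 + 168(h−1) + 42a₂ + 56a₃ + 63a₄ + 72a₇; consequently, by the classification of signatures, PSL(2,𝔽₇) admits a generating vector of type (h; 2^[a₂],3^[a₃],4^[a₄],7^[a₇]) realizing genus g. -/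

import Mathlib

open scoped commutatorElement in
/-- `GenVector G h periods` says that the group `G` admits a generating vector of type
`(h; periods)`. -/
def GenVector (G : Type) [Group G] (h : ℕ) (periods : List ℕ) : Prop :=
  ∃ (α β : Fin h → G) (c : Fin periods.length → G),
    (∀ j, orderOf (c j) = periods.get j) ∧
    ((List.ofFn fun i => ⁅α i, β i⁆).prod * (List.ofFn c).prod = 1) ∧
    Subgroup.closure (Set.range α ∪ Set.range β ∪ Set.range c) = ⊤

/-- The period list `2^[a₂], 3^[a₃], 4^[a₄], 7^[a₇]`. -/
def periods7 (a₂ a₃ a₄ a₇ : ℕ) : List ℕ :=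
  List.replicate a₂ 2 ++ List.replicate a₃ 3 ++ List.replicate a₄ 4 ++ List.replicate a₇ 7

open Matrix MatrixGroups
open scoped commutatorElement

abbrev SL7 := Matrix.SpecialLinearGroup (Fin 2) (ZMod 7)
abbrev G7 := Matrix.ProjectiveSpecialLinearGroup (Fin 2) (ZMod 7)

instance : DecidableEq SL7 := fun a b => decidable_of_iff (a.1 = b.1) Subtype.ext_iff.symm

theorem center_iff (X : SL7) : X ∈ Subgroup.center SL7 ↔ X = 1 ∨ X = -1 := by
  rw [Matrix.SpecialLinearGroup.mem_center_iff]
  constructor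
  · rintro ⟨r, hr, hs⟩
    have key : ∀ r : ZMod 7, r ^ Fintype.card (Fin 2) = 1 → r = 1 ∨ r = -1 := by decide
    rcases key r hr with h | h <;> [left; right] <;> subst h <;>
      · apply Subtype.ext; rw [← hs]; decide
  · rintro (h | h) <;> subst h
    · exact ⟨1, by decide, by decide⟩
    · exact ⟨-1, by decide, by decide⟩

instance decCenter : DecidablePred (· ∈ Subgroup.center SL7) :=
  fun X => decidable_of_iff (X = 1 ∨ X = -1) (center_iff X).symm

instance decG7 : DecidableEq G7 := fun x y =>
  Quotient.recOnSubsingleton₂ x y fun a b =>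
    decidable_of_iff (a⁻¹ * b ∈ Subgroup.center SL7) (QuotientGroup.eq).symm

set_option maxHeartbeats 4000000 in
set_option maxRecDepth 100000 in
theorem cardSL : Nat.card SL7 = 336 := by
  rw [Nat.card_eq_fintype_card]; decide

theorem center_eq : Subgroup.center SL7 = Subgroup.zpowers (-1 : SL7) := by
  ext X
  rw [center_iff]
  constructor
  · rintro (rfl | rfl)
    · exact one_mem _
    · exact Subgroup.mem_zpowers _
  · rintro ⟨k, rfl⟩
    have h2 : (-1 : SL7) ^ (2 : ℤ) = 1 := by
      rw [show (2:ℤ) = ((2:ℕ):ℤ) by norm_num, zpow_natCast]; decide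
    rcases Int.even_or_odd k with ⟨m, hm⟩ | ⟨m, hm⟩
    · left; subst hm
      show (-1 : SL7) ^ (m + m) = 1
      rw [show m + m = 2 * m by ring, _root_.zpow_mul, h2, _root_.one_zpow]
    · right; subst hm
      show (-1 : SL7) ^ (2 * m + 1) = -1
      rw [_root_.zpow_add, _root_.zpow_mul, h2, _root_.one_zpow, one_mul, zpow_one]

theorem orderNegOne : orderOf (-1 : SL7) = 2 := by
  have h2 : ((-1 : SL7)) ^ 2 = 1 := by decide
  have h1 : (-1 : SL7) ≠ 1 := by decide
  exact orderOf_eq_prime h2 h1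

theorem card_G7 : Nat.card G7 = 168 := by
  have h := Subgroup.card_eq_card_quotient_mul_card_subgroup (Subgroup.center SL7)
  rw [cardSL] at h
  have hc : Nat.card (Subgroup.center SL7) = 2 := by
    rw [center_eq, Nat.card_zpowers, orderNegOne]
  rw [hc] at h
  have : Nat.card G7 = Nat.card (SL7 ⧸ Subgroup.center SL7) := rfl
  omega

instance fact2 : Fact (Nat.Prime 2) := ⟨by norm_num⟩
instance fact3 : Fact (Nat.Prime 3) := ⟨by norm_num⟩
instance fact7 : Fact (Nat.Prime 7) := ⟨by norm_num⟩

-- order helpers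
theorem ord2 {M : G7} (h1 : M ^ 2 = 1) (h2 : M ≠ 1) : orderOf M = 2 :=
  orderOf_eq_prime h1 h2
theorem ord3 {M : G7} (h1 : M ^ 3 = 1) (h2 : M ≠ 1) : orderOf M = 3 :=
  orderOf_eq_prime h1 h2
theorem ord7 {M : G7} (h1 : M ^ 7 = 1) (h2 : M ≠ 1) : orderOf M = 7 :=
  orderOf_eq_prime h1 h2
theorem ord4 {M : G7} (h1 : M ^ 4 = 1) (h2 : M ^ 2 ≠ 1) : orderOf M = 4 := by
  have hd : orderOf M ∣ 4 := orderOf_dvd_of_pow_eq_one h1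
  have hle : orderOf M ≤ 4 := Nat.le_of_dvd (by norm_num) hd
  have h0 : orderOf M ≠ 0 := by
    intro h; rw [h] at hd; norm_num at hd
  have hne1 : orderOf M ≠ 1 := by
    intro h; rw [orderOf_eq_one_iff] at h; exact h2 (by rw [h, one_pow])
  have hne2 : orderOf M ≠ 2 := by
    intro h
    have := pow_orderOf_eq_one M
    rw [h] at this
    exact h2 this
  have hne3 : orderOf M ≠ 3 := by
    intro h; rw [h] at hd; norm_num at hd
  omega

theorem closure_top_of (H : Subgroup G7) (g3 g4 t7 u : G7)
    (m3 : g3 ∈ H) (m4 : g4 ∈ H) (m7 : t7 ∈ H) (mu : u ∈ H)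
    (o3 : orderOf g3 = 3) (o4 : orderOf g4 = 4) (o7 : orderOf t7 = 7)
    (hu7 : u ^ 7 = 1) (hune : ∀ i : ℕ, i < 7 → u ≠ t7 ^ i) : H = ⊤ := by
  have hdvd : Nat.card H ∣ 168 := card_G7 ▸ Subgroup.card_subgroup_dvd_card H
  have d3 : 3 ∣ Nat.card H := by have := H.orderOf_dvd_natCard m3; rwa [o3] at this
  have d4 : 4 ∣ Nat.card H := by have := H.orderOf_dvd_natCard m4; rwa [o4] at this
  have d7 : 7 ∣ Nat.card H := by have := H.orderOf_dvd_natCard m7; rwa [o7] at this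
  have d12 : 12 ∣ Nat.card H := Nat.Coprime.mul_dvd_of_dvd_of_dvd (by norm_num) d3 d4
  have d84 : 84 ∣ Nat.card H := by
    have := Nat.Coprime.mul_dvd_of_dvd_of_dvd (show Nat.Coprime 12 7 by norm_num) d12 d7
    simpa using this
  have hpos : 0 < Nat.card H := Nat.card_pos
  have hle : Nat.card H ≤ 168 := Nat.le_of_dvd (by norm_num) hdvd
  obtain ⟨k, hk⟩ := d84
  have hcases : Nat.card H = 84 ∨ Nat.card H = 168 := by omega
  rcases hcases with h84 | h168
  swap
  · exact Subgroup.eq_top_of_card_eq H (by rw [h168, card_G7])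
  exfalso
  haveI : Fact (Nat.Prime 7) := ⟨by norm_num⟩
  set K := ↥H
  let T : K := ⟨t7, m7⟩
  let U : K := ⟨u, mu⟩
  have oT : orderOf T = 7 := by
    have h := orderOf_injective H.subtype H.subtype_injective T
    rw [← h]; exact o7
  have hU7 : U ^ 7 = 1 := by
    apply Subtype.ext
    rw [SubmonoidClass.coe_pow]
    exact hu7
  obtain ⟨P⟩ : Nonempty (Sylow 7 K) := inferInstance
  have hfact : (Nat.card K).factorization 7 = 1 := by
    rw [h84]
    have h84' : (84 : ℕ) = 7 ^ 1 * 12 := by norm_num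
    rw [h84', Nat.factorization_mul (by norm_num) (by norm_num)]
    rw [Nat.Prime.factorization_pow (by norm_num)]
    simp [Nat.factorization_eq_zero_of_not_dvd (by norm_num : ¬ (7:ℕ) ∣ 12)]
  have hPcard : Nat.card P = 7 := by
    rw [P.card_eq_multiplicity, hfact, pow_one]
  have hPindex : (P : Subgroup K).index = 12 := by
    have := Subgroup.card_mul_index (P : Subgroup K)
    rw [hPcard, h84] at this
    omega
  have hnum : Nat.card (Sylow 7 K) = 1 := by
    have hmod := card_sylow_modEq_one 7 K
    have hdvd12 : Nat.card (Sylow 7 K) ∣ 12 := hPindex ▸ Sylow.card_dvd_index P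
    have hm : Nat.card (Sylow 7 K) % 7 = 1 := by
      have : Nat.card (Sylow 7 K) % 7 = 1 % 7 := hmod
      simpa using this
    have hle12 : Nat.card (Sylow 7 K) ≤ 12 := Nat.le_of_dvd (by norm_num) hdvd12
    have h18 : Nat.card (Sylow 7 K) = 1 ∨ Nat.card (Sylow 7 K) = 8 := by omega
    rcases h18 with h | h
    · exact h
    · rw [h] at hdvd12; norm_num at hdvd12
  have huniq : ∀ Q : Sylow 7 K, Q = P := by
    have h1 := Nat.card_eq_one_iff_unique.mp hnum
    intro Q; exact h1.1.elim Q P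
  have key : ∀ v : K, v ^ 7 = 1 → v ∈ (P : Subgroup K) := by
    intro v hv
    have hpg : IsPGroup 7 (Subgroup.zpowers v) := by
      intro g
      obtain ⟨kk, hkk⟩ := g.2
      have hkk' : v ^ kk = (g : K) := hkk
      refine ⟨1, Subtype.ext ?_⟩
      rw [SubmonoidClass.coe_pow, OneMemClass.coe_one]
      rw [← hkk', pow_one, ← zpow_natCast, ← _root_.zpow_mul, mul_comm, _root_.zpow_mul,
        zpow_natCast, hv, _root_.one_zpow]
    obtain ⟨Q, hQ⟩ := hpg.exists_le_sylow
    rw [← huniq Q]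
    exact hQ (Subgroup.mem_zpowers v)
  have hTP : Subgroup.zpowers T ≤ (P : Subgroup K) := by
    rw [Subgroup.zpowers_le]
    exact key T (by have := pow_orderOf_eq_one T; rwa [oT] at this)
  have hzT : Subgroup.zpowers T = (P : Subgroup K) := by
    apply Subgroup.eq_of_le_of_card_ge hTP
    rw [hPcard, Nat.card_zpowers, oT]
  have hUP : U ∈ Subgroup.zpowers T := by
    rw [hzT]; exact key U hU7
  obtain ⟨kk, hkk⟩ := hUP
  have hkk' : T ^ kk = U := hkk
  have hT7 : T ^ (7:ℤ) = 1 := by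
    rw [show (7:ℤ) = ((7:ℕ):ℤ) by norm_num, zpow_natCast]
    have := pow_orderOf_eq_one T; rwa [oT] at this
  have hmodk : T ^ (kk % 7 : ℤ) = U := by
    rw [← hkk']
    conv_rhs => rw [show kk = 7 * (kk / 7) + kk % 7 from (Int.mul_ediv_add_emod kk 7).symm]
    rw [_root_.zpow_add, _root_.zpow_mul, hT7, _root_.one_zpow, one_mul]
  have hnonneg : 0 ≤ kk % 7 := Int.emod_nonneg kk (by norm_num)
  have hlt : kk % 7 < 7 := Int.emod_lt_of_pos kk (by norm_num)
  refine hune (kk % 7).toNat (by omega) ?_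
  have : T ^ ((kk % 7).toNat) = U := by
    rw [← hmodk, ← zpow_natCast, Int.toNat_of_nonneg hnonneg]
  calc u = (U : G7) := rfl
    _ = ((T ^ ((kk % 7).toNat) : K) : G7) := by rw [this]
    _ = t7 ^ ((kk % 7).toNat) := by rw [SubmonoidClass.coe_pow]

section master

variable {G : Type} [Group G]

/-- A padded block: the given list followed by `b` copies of `u` and `b` copies of `u⁻¹`. -/
def blk (l : List G) (u : G) (b : ℕ) : List G := l ++ (List.replicate b u ++ List.replicate b u⁻¹)

theorem blk_length (l : List G) (u : G) (b : ℕ) : (blk l u b).length = l.length + 2 * b := by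
  simp [blk]; omega

theorem blk_prod (l : List G) (u : G) (b : ℕ) : (blk l u b).prod = l.prod := by
  simp [blk, List.prod_append, List.prod_replicate, inv_pow]

theorem blk_order {l : List G} {u : G} {n : ℕ} (b : ℕ) (hl : ∀ v ∈ l, orderOf v = n)
    (hu : orderOf u = n) : ∀ v ∈ blk l u b, orderOf v = n := by
  intro v hv
  simp only [blk, List.mem_append, List.mem_replicate] at hv
  rcases hv with h | ⟨-, rfl⟩ | ⟨-, rfl⟩
  · exact hl v h
  · exact hu
  · rw [orderOf_inv]; exact hu

theorem forall₂_orderOf {l : List G} {n : ℕ} (hl : ∀ v ∈ l, orderOf v = n) :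
    List.Forall₂ (fun g k => orderOf g = k) l (List.replicate l.length n) := by
  induction l with
  | nil => simp
  | cons a t ih =>
    simp only [List.length_cons, List.replicate_succ]
    exact List.Forall₂.cons (hl a (by simp)) (ih fun v hv => hl v (by simp [hv]))

theorem ofFn_get_cast {n : ℕ} (L : List G) (h : n = L.length) :
    List.ofFn (fun j : Fin n => L.get (Fin.cast h j)) = L := by
  subst h
  exact List.ofFn_get L

theorem core (l₂ l₃ l₄ l₇ : List G) (x y z w : G) (b₂ b₃ b₄ b₇ : ℕ)
    (hx : orderOf x = 2) (hy : orderOf y = 3) (hz : orderOf z = 4) (hw : orderOf w = 7)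
    (h2 : ∀ v ∈ l₂, orderOf v = 2) (h3 : ∀ v ∈ l₃, orderOf v = 3)
    (h4 : ∀ v ∈ l₄, orderOf v = 4) (h7 : ∀ v ∈ l₇, orderOf v = 7) :
    ∃ c : Fin (periods7 (l₂.length + 2*b₂) (l₃.length + 2*b₃) (l₄.length + 2*b₄)
        (l₇.length + 2*b₇)).length → G,
      (∀ j, orderOf (c j) = (periods7 (l₂.length + 2*b₂) (l₃.length + 2*b₃) (l₄.length + 2*b₄)
        (l₇.length + 2*b₇)).get j) ∧
      (List.ofFn c).prod = l₂.prod * (l₃.prod * (l₄.prod * l₇.prod)) ∧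
      (∀ v, (v ∈ l₂ ∨ v ∈ l₃ ∨ v ∈ l₄ ∨ v ∈ l₇) → v ∈ Set.range c) := by
  set P : List ℕ := periods7 (l₂.length + 2*b₂) (l₃.length + 2*b₃) (l₄.length + 2*b₄)
    (l₇.length + 2*b₇) with hP
  set L : List G := blk l₂ x b₂ ++ blk l₃ y b₃ ++ blk l₄ z b₄ ++ blk l₇ w b₇ with hL
  have hF : List.Forall₂ (fun g k => orderOf g = k) L P := by
    rw [hL, hP]
    show List.Forall₂ _ _ (List.replicate _ 2 ++ List.replicate _ 3 ++ List.replicate _ 4 ++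
      List.replicate _ 7)
    have f2 := forall₂_orderOf (blk_order b₂ h2 hx)
    have f3 := forall₂_orderOf (blk_order b₃ h3 hy)
    have f4 := forall₂_orderOf (blk_order b₄ h4 hz)
    have f7 := forall₂_orderOf (blk_order b₇ h7 hw)
    rw [blk_length] at f2 f3 f4 f7
    exact List.rel_append (List.rel_append (List.rel_append f2 f3) f4) f7
  have hlen : P.length = L.length := hF.length_eq.symm
  refine ⟨fun j => L.get (Fin.cast hlen j), ?_, ?_, ?_⟩
  · intro j
    have := (List.forall₂_iff_get.mp hF).2 j.1 ((Fin.cast hlen j).isLt) j.isLt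
    exact this
  · rw [ofFn_get_cast L hlen, hL]
    simp only [List.prod_append, blk_prod]
    group
  · intro v hv
    have hvL : v ∈ L := by
      rw [hL]
      simp only [List.mem_append]
      have m2 : v ∈ l₂ → v ∈ blk l₂ x b₂ := fun h => List.mem_append_left _ h
      have m3 : v ∈ l₃ → v ∈ blk l₃ y b₃ := fun h => List.mem_append_left _ h
      have m4 : v ∈ l₄ → v ∈ blk l₄ z b₄ := fun h => List.mem_append_left _ h
      have m7 : v ∈ l₇ → v ∈ blk l₇ w b₇ := fun h => List.mem_append_left _ h
      tauto
    obtain ⟨⟨i, hi⟩, hget⟩ := List.mem_iff_get.mp hvL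
    refine ⟨⟨i, by omega⟩, ?_⟩
    rw [← hget]
    rfl

theorem master1 (A B x y z w : G) (l₂ l₃ l₄ l₇ : List G) (b₂ b₃ b₄ b₇ : ℕ)
    (hx : orderOf x = 2) (hy : orderOf y = 3) (hz : orderOf z = 4) (hw : orderOf w = 7)
    (h2 : ∀ v ∈ l₂, orderOf v = 2) (h3 : ∀ v ∈ l₃, orderOf v = 3)
    (h4 : ∀ v ∈ l₄, orderOf v = 4) (h7 : ∀ v ∈ l₇, orderOf v = 7)
    (hprod : ⁅A, B⁆ * (l₂.prod * (l₃.prod * (l₄.prod * l₇.prod))) = 1)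
    (htop : Subgroup.closure ({A, B} : Set G) = ⊤) :
    GenVector G 1 (periods7 (l₂.length + 2*b₂) (l₃.length + 2*b₃) (l₄.length + 2*b₄)
      (l₇.length + 2*b₇)) := by
  obtain ⟨c, hc1, hc2, hc3⟩ := core l₂ l₃ l₄ l₇ x y z w b₂ b₃ b₄ b₇ hx hy hz hw h2 h3 h4 h7
  refine ⟨fun _ => A, fun _ => B, c, hc1, ?_, ?_⟩
  · rw [show (List.ofFn fun i : Fin 1 => ⁅(fun _ : Fin 1 => A) i, (fun _ : Fin 1 => B) i⁆)
        = [⁅A, B⁆] from rfl, hc2]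
    simpa using hprod
  · rw [eq_top_iff, ← htop, Subgroup.closure_le]
    intro s hs
    rcases hs with rfl | hs
    · exact Subgroup.subset_closure (Or.inl (Or.inl ⟨0, rfl⟩))
    · rcases hs with rfl
      exact Subgroup.subset_closure (Or.inl (Or.inr ⟨0, rfl⟩))

theorem master0 (x y z w : G) (l₂ l₃ l₄ l₇ : List G) (b₂ b₃ b₄ b₇ : ℕ)
    (hx : orderOf x = 2) (hy : orderOf y = 3) (hz : orderOf z = 4) (hw : orderOf w = 7)
    (h2 : ∀ v ∈ l₂, orderOf v = 2) (h3 : ∀ v ∈ l₃, orderOf v = 3)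
    (h4 : ∀ v ∈ l₄, orderOf v = 4) (h7 : ∀ v ∈ l₇, orderOf v = 7)
    (hprod : l₂.prod * (l₃.prod * (l₄.prod * l₇.prod)) = 1)
    (htop : Subgroup.closure {v : G | v ∈ l₂ ∨ v ∈ l₃ ∨ v ∈ l₄ ∨ v ∈ l₇} = ⊤) :
    GenVector G 0 (periods7 (l₂.length + 2*b₂) (l₃.length + 2*b₃) (l₄.length + 2*b₄)
      (l₇.length + 2*b₇)) := by
  obtain ⟨c, hc1, hc2, hc3⟩ := core l₂ l₃ l₄ l₇ x y z w b₂ b₃ b₄ b₇ hx hy hz hw h2 h3 h4 h7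
  refine ⟨fun i => i.elim0, fun i => i.elim0, c, hc1, ?_, ?_⟩
  · rw [show (List.ofFn fun i : Fin 0 => ⁅(fun j : Fin 0 => j.elim0) i,
        (fun j : Fin 0 => j.elim0) i⁆) = ([] : List G) from rfl, hc2]
    simpa using hprod
  · rw [eq_top_iff, ← htop, Subgroup.closure_le]
    intro s hs
    exact Subgroup.subset_closure (Or.inr (hc3 s hs))

end master
-- concrete elements
def pA : G7 := QuotientGroup.mk (⟨!![1,3;5,2], by decide⟩ : SL7)
def pB : G7 := QuotientGroup.mk (⟨!![2,3;5,1], by decide⟩ : SL7)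
def E0 : G7 := QuotientGroup.mk (⟨!![1,5;1,6], by decide⟩ : SL7)
def E1 : G7 := QuotientGroup.mk (⟨!![2,0;1,4], by decide⟩ : SL7)
def E10 : G7 := QuotientGroup.mk (⟨!![0,2;3,5], by decide⟩ : SL7)
def E11 : G7 := QuotientGroup.mk (⟨!![1,0;3,1], by decide⟩ : SL7)
def E12 : G7 := QuotientGroup.mk (⟨!![2,6;1,0], by decide⟩ : SL7)
def E13 : G7 := QuotientGroup.mk (⟨!![2,5;4,0], by decide⟩ : SL7)
def E14 : G7 := QuotientGroup.mk (⟨!![2,1;1,1], by decide⟩ : SL7)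
def E15 : G7 := QuotientGroup.mk (⟨!![1,0;5,1], by decide⟩ : SL7)
def E16 : G7 := QuotientGroup.mk (⟨!![1,4;0,1], by decide⟩ : SL7)
def E17 : G7 := QuotientGroup.mk (⟨!![3,6;4,6], by decide⟩ : SL7)
def E18 : G7 := QuotientGroup.mk (⟨!![3,1;5,2], by decide⟩ : SL7)
def E19 : G7 := QuotientGroup.mk (⟨!![0,3;2,2], by decide⟩ : SL7)
def E2 : G7 := QuotientGroup.mk (⟨!![1,3;5,2], by decide⟩ : SL7)
def E20 : G7 := QuotientGroup.mk (⟨!![3,6;2,2], by decide⟩ : SL7)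
def E21 : G7 := QuotientGroup.mk (⟨!![1,0;2,1], by decide⟩ : SL7)
def E22 : G7 := QuotientGroup.mk (⟨!![2,0;3,4], by decide⟩ : SL7)
def E23 : G7 := QuotientGroup.mk (⟨!![1,2;3,0], by decide⟩ : SL7)
def E24 : G7 := QuotientGroup.mk (⟨!![3,3;2,0], by decide⟩ : SL7)
def E25 : G7 := QuotientGroup.mk (⟨!![1,2;1,3], by decide⟩ : SL7)
def E26 : G7 := QuotientGroup.mk (⟨!![1,1;3,4], by decide⟩ : SL7)
def E27 : G7 := QuotientGroup.mk (⟨!![0,2;3,6], by decide⟩ : SL7)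
def E28 : G7 := QuotientGroup.mk (⟨!![3,4;1,4], by decide⟩ : SL7)
def E29 : G7 := QuotientGroup.mk (⟨!![1,3;1,4], by decide⟩ : SL7)
def E3 : G7 := QuotientGroup.mk (⟨!![2,4;5,0], by decide⟩ : SL7)
def E30 : G7 := QuotientGroup.mk (⟨!![3,6;5,1], by decide⟩ : SL7)
def E31 : G7 := QuotientGroup.mk (⟨!![2,3;5,1], by decide⟩ : SL7)
def E32 : G7 := QuotientGroup.mk (⟨!![2,3;2,0], by decide⟩ : SL7)
def E33 : G7 := QuotientGroup.mk (⟨!![1,2;6,6], by decide⟩ : SL7)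
def E34 : G7 := QuotientGroup.mk (⟨!![3,0;2,5], by decide⟩ : SL7)
def E35 : G7 := QuotientGroup.mk (⟨!![2,2;2,6], by decide⟩ : SL7)
def E36 : G7 := QuotientGroup.mk (⟨!![1,6;4,4], by decide⟩ : SL7)
def E37 : G7 := QuotientGroup.mk (⟨!![2,5;0,4], by decide⟩ : SL7)
def E38 : G7 := QuotientGroup.mk (⟨!![1,5;3,2], by decide⟩ : SL7)
def E39 : G7 := QuotientGroup.mk (⟨!![1,6;1,0], by decide⟩ : SL7)
def E4 : G7 := QuotientGroup.mk (⟨!![3,2;6,2], by decide⟩ : SL7)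
def E40 : G7 := QuotientGroup.mk (⟨!![0,2;3,0], by decide⟩ : SL7)
def E41 : G7 := QuotientGroup.mk (⟨!![3,2;2,4], by decide⟩ : SL7)
def E5 : G7 := QuotientGroup.mk (⟨!![3,3;1,6], by decide⟩ : SL7)
def E6 : G7 := QuotientGroup.mk (⟨!![1,1;2,3], by decide⟩ : SL7)
def E7 : G7 := QuotientGroup.mk (⟨!![2,2;6,3], by decide⟩ : SL7)
def E8 : G7 := QuotientGroup.mk (⟨!![0,1;6,5], by decide⟩ : SL7)
def E9 : G7 := QuotientGroup.mk (⟨!![1,5;2,4], by decide⟩ : SL7)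
theorem oE0 : orderOf E0 = 2 := ord2 (by decide) (by decide)
theorem oE1 : orderOf E1 = 3 := ord3 (by decide) (by decide)
theorem oE10 : orderOf E10 = 7 := ord7 (by decide) (by decide)
theorem oE11 : orderOf E11 = 7 := ord7 (by decide) (by decide)
theorem oE12 : orderOf E12 = 7 := ord7 (by decide) (by decide)
theorem oE13 : orderOf E13 = 7 := ord7 (by decide) (by decide)
theorem oE14 : orderOf E14 = 4 := ord4 (by decide) (by decide)
theorem oE15 : orderOf E15 = 7 := ord7 (by decide) (by decide)
theorem oE16 : orderOf E16 = 7 := ord7 (by decide) (by decide)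
theorem oE17 : orderOf E17 = 7 := ord7 (by decide) (by decide)
theorem oE18 : orderOf E18 = 7 := ord7 (by decide) (by decide)
theorem oE19 : orderOf E19 = 7 := ord7 (by decide) (by decide)
theorem oE2 : orderOf E2 = 4 := ord4 (by decide) (by decide)
theorem oE20 : orderOf E20 = 7 := ord7 (by decide) (by decide)
theorem oE21 : orderOf E21 = 7 := ord7 (by decide) (by decide)
theorem oE22 : orderOf E22 = 3 := ord3 (by decide) (by decide)
theorem oE23 : orderOf E23 = 3 := ord3 (by decide) (by decide)
theorem oE24 : orderOf E24 = 4 := ord4 (by decide) (by decide)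
theorem oE25 : orderOf E25 = 4 := ord4 (by decide) (by decide)
theorem oE26 : orderOf E26 = 7 := ord7 (by decide) (by decide)
theorem oE27 : orderOf E27 = 3 := ord3 (by decide) (by decide)
theorem oE28 : orderOf E28 = 2 := ord2 (by decide) (by decide)
theorem oE29 : orderOf E29 = 7 := ord7 (by decide) (by decide)
theorem oE3 : orderOf E3 = 7 := ord7 (by decide) (by decide)
theorem oE30 : orderOf E30 = 4 := ord4 (by decide) (by decide)
theorem oE31 : orderOf E31 = 4 := ord4 (by decide) (by decide)
theorem oE32 : orderOf E32 = 7 := ord7 (by decide) (by decide)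
theorem oE33 : orderOf E33 = 2 := ord2 (by decide) (by decide)
theorem oE34 : orderOf E34 = 3 := ord3 (by decide) (by decide)
theorem oE35 : orderOf E35 = 3 := ord3 (by decide) (by decide)
theorem oE36 : orderOf E36 = 7 := ord7 (by decide) (by decide)
theorem oE37 : orderOf E37 = 3 := ord3 (by decide) (by decide)
theorem oE38 : orderOf E38 = 4 := ord4 (by decide) (by decide)
theorem oE39 : orderOf E39 = 3 := ord3 (by decide) (by decide)
theorem oE4 : orderOf E4 = 7 := ord7 (by decide) (by decide)
theorem oE40 : orderOf E40 = 2 := ord2 (by decide) (by decide)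
theorem oE41 : orderOf E41 = 2 := ord2 (by decide) (by decide)
theorem oE5 : orderOf E5 = 7 := ord7 (by decide) (by decide)
theorem oE6 : orderOf E6 = 4 := ord4 (by decide) (by decide)
theorem oE7 : orderOf E7 = 7 := ord7 (by decide) (by decide)
theorem oE8 : orderOf E8 = 7 := ord7 (by decide) (by decide)
theorem oE9 : orderOf E9 = 7 := ord7 (by decide) (by decide)

theorem closL1 : Subgroup.closure ({pA, pB} : Set G7) = ⊤ := by
  have h0 : pA ∈ Subgroup.closure ({pA, pB} : Set G7) := Subgroup.subset_closure (by simp)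
  have h1 : pB ∈ Subgroup.closure ({pA, pB} : Set G7) := Subgroup.subset_closure (by simp)
  exact closure_top_of _ (pA * pB) (pA) (pA * pA * pB * pA * pB * pB) (pA * pA * pB * pB * pA * pB)
    (mul_mem h0 h1) h0 (mul_mem (mul_mem (mul_mem (mul_mem (mul_mem h0 h0) h1) h0) h1) h1) (mul_mem (mul_mem (mul_mem (mul_mem (mul_mem h0 h0) h1) h1) h0) h1)
    (ord3 (by decide) (by decide)) (ord4 (by decide) (by decide))
    (ord7 (by decide) (by decide)) (by decide) (by decide)

theorem closP0_1 : Subgroup.closure {v : G7 | v ∈ ([] : List G7) ∨ v ∈ ([] : List G7) ∨ v ∈ ([] : List G7) ∨ v ∈ [E12, E4, E13]} = ⊤ := by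
  have h0 : E12 ∈ Subgroup.closure {v : G7 | v ∈ ([] : List G7) ∨ v ∈ ([] : List G7) ∨ v ∈ ([] : List G7) ∨ v ∈ [E12, E4, E13]} := Subgroup.subset_closure (by simp)
  have h1 : E4 ∈ Subgroup.closure {v : G7 | v ∈ ([] : List G7) ∨ v ∈ ([] : List G7) ∨ v ∈ ([] : List G7) ∨ v ∈ [E12, E4, E13]} := Subgroup.subset_closure (by simp)
  have h2 : E13 ∈ Subgroup.closure {v : G7 | v ∈ ([] : List G7) ∨ v ∈ ([] : List G7) ∨ v ∈ ([] : List G7) ∨ v ∈ [E12, E4, E13]} := Subgroup.subset_closure (by simp)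
  exact closure_top_of _ (E12 * E12 * E4) (E12 * E13 * E4) (E12) (E4)
    (mul_mem (mul_mem h0 h0) h1) (mul_mem (mul_mem h0 h2) h1) h0 h1
    (ord3 (by decide) (by decide)) (ord4 (by decide) (by decide))
    (ord7 (by decide) (by decide)) (by decide) (by decide)

theorem patP0_0003 (b₂ b₃ b₄ b₇ : ℕ) :
    GenVector G7 0 (periods7 (2*b₂) (2*b₃) (2*b₄) (3 + 2*b₇)) := by
  have := master0 E0 E1 E2 E3 ([] : List G7) ([] : List G7) ([] : List G7) [E12, E4, E13] b₂ b₃ b₄ b₇ oE0 oE1 oE2 oE3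
    (by intro v hv; simp at hv) (by intro v hv; simp at hv) (by intro v hv; simp at hv) (by intro v hv; simp only [List.mem_cons, List.not_mem_nil, or_false] at hv; rcases hv with rfl | rfl | rfl; exacts [oE12, oE4, oE13])
    (by decide) closP0_1
  simpa using this

theorem closP0_2 : Subgroup.closure {v : G7 | v ∈ ([] : List G7) ∨ v ∈ ([] : List G7) ∨ v ∈ [E2] ∨ v ∈ [E8, E9]} = ⊤ := by
  have h0 : E2 ∈ Subgroup.closure {v : G7 | v ∈ ([] : List G7) ∨ v ∈ ([] : List G7) ∨ v ∈ [E2] ∨ v ∈ [E8, E9]} := Subgroup.subset_closure (by simp)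
  have h1 : E8 ∈ Subgroup.closure {v : G7 | v ∈ ([] : List G7) ∨ v ∈ ([] : List G7) ∨ v ∈ [E2] ∨ v ∈ [E8, E9]} := Subgroup.subset_closure (by simp)
  have h2 : E9 ∈ Subgroup.closure {v : G7 | v ∈ ([] : List G7) ∨ v ∈ ([] : List G7) ∨ v ∈ [E2] ∨ v ∈ [E8, E9]} := Subgroup.subset_closure (by simp)
  exact closure_top_of _ (E2 * E8 * E8) (E2) (E8) (E9)
    (mul_mem (mul_mem h0 h1) h1) h0 h1 h2
    (ord3 (by decide) (by decide)) (ord4 (by decide) (by decide))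
    (ord7 (by decide) (by decide)) (by decide) (by decide)

theorem patP0_0012 (b₂ b₃ b₄ b₇ : ℕ) :
    GenVector G7 0 (periods7 (2*b₂) (2*b₃) (1 + 2*b₄) (2 + 2*b₇)) := by
  have := master0 E0 E1 E2 E3 ([] : List G7) ([] : List G7) [E2] [E8, E9] b₂ b₃ b₄ b₇ oE0 oE1 oE2 oE3
    (by intro v hv; simp at hv) (by intro v hv; simp at hv) (by intro v hv; simp only [List.mem_cons, List.not_mem_nil, or_false] at hv; rcases hv with rfl; exacts [oE2]) (by intro v hv; simp only [List.mem_cons, List.not_mem_nil, or_false] at hv; rcases hv with rfl | rfl; exacts [oE8, oE9])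
    (by decide) closP0_2
  simpa using this

theorem closP0_3 : Subgroup.closure {v : G7 | v ∈ ([] : List G7) ∨ v ∈ ([] : List G7) ∨ v ∈ [E2] ∨ v ∈ [E12, E4, E8]} = ⊤ := by
  have h0 : E2 ∈ Subgroup.closure {v : G7 | v ∈ ([] : List G7) ∨ v ∈ ([] : List G7) ∨ v ∈ [E2] ∨ v ∈ [E12, E4, E8]} := Subgroup.subset_closure (by simp)
  have h1 : E12 ∈ Subgroup.closure {v : G7 | v ∈ ([] : List G7) ∨ v ∈ ([] : List G7) ∨ v ∈ [E2] ∨ v ∈ [E12, E4, E8]} := Subgroup.subset_closure (by simp)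
  have h2 : E4 ∈ Subgroup.closure {v : G7 | v ∈ ([] : List G7) ∨ v ∈ ([] : List G7) ∨ v ∈ [E2] ∨ v ∈ [E12, E4, E8]} := Subgroup.subset_closure (by simp)
  have h3 : E8 ∈ Subgroup.closure {v : G7 | v ∈ ([] : List G7) ∨ v ∈ ([] : List G7) ∨ v ∈ [E2] ∨ v ∈ [E12, E4, E8]} := Subgroup.subset_closure (by simp)
  exact closure_top_of _ (E2 * E8 * E4) (E2) (E12) (E4)
    (mul_mem (mul_mem h0 h3) h2) h0 h1 h2
    (ord3 (by decide) (by decide)) (ord4 (by decide) (by decide))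
    (ord7 (by decide) (by decide)) (by decide) (by decide)

theorem patP0_0013 (b₂ b₃ b₄ b₇ : ℕ) :
    GenVector G7 0 (periods7 (2*b₂) (2*b₃) (1 + 2*b₄) (3 + 2*b₇)) := by
  have := master0 E0 E1 E2 E3 ([] : List G7) ([] : List G7) [E2] [E12, E4, E8] b₂ b₃ b₄ b₇ oE0 oE1 oE2 oE3
    (by intro v hv; simp at hv) (by intro v hv; simp at hv) (by intro v hv; simp only [List.mem_cons, List.not_mem_nil, or_false] at hv; rcases hv with rfl; exacts [oE2]) (by intro v hv; simp only [List.mem_cons, List.not_mem_nil, or_false] at hv; rcases hv with rfl | rfl | rfl; exacts [oE12, oE4, oE8])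
    (by decide) closP0_3
  simpa using this

theorem closP0_4 : Subgroup.closure {v : G7 | v ∈ ([] : List G7) ∨ v ∈ [E1] ∨ v ∈ ([] : List G7) ∨ v ∈ [E4, E5]} = ⊤ := by
  have h0 : E1 ∈ Subgroup.closure {v : G7 | v ∈ ([] : List G7) ∨ v ∈ [E1] ∨ v ∈ ([] : List G7) ∨ v ∈ [E4, E5]} := Subgroup.subset_closure (by simp)
  have h1 : E4 ∈ Subgroup.closure {v : G7 | v ∈ ([] : List G7) ∨ v ∈ [E1] ∨ v ∈ ([] : List G7) ∨ v ∈ [E4, E5]} := Subgroup.subset_closure (by simp)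
  have h2 : E5 ∈ Subgroup.closure {v : G7 | v ∈ ([] : List G7) ∨ v ∈ [E1] ∨ v ∈ ([] : List G7) ∨ v ∈ [E4, E5]} := Subgroup.subset_closure (by simp)
  exact closure_top_of _ (E1) (E1 * E4 * E4) (E4) (E5)
    h0 (mul_mem (mul_mem h0 h1) h1) h1 h2
    (ord3 (by decide) (by decide)) (ord4 (by decide) (by decide))
    (ord7 (by decide) (by decide)) (by decide) (by decide)

theorem patP0_0102 (b₂ b₃ b₄ b₇ : ℕ) :
    GenVector G7 0 (periods7 (2*b₂) (1 + 2*b₃) (2*b₄) (2 + 2*b₇)) := by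
  have := master0 E0 E1 E2 E3 ([] : List G7) [E1] ([] : List G7) [E4, E5] b₂ b₃ b₄ b₇ oE0 oE1 oE2 oE3
    (by intro v hv; simp at hv) (by intro v hv; simp only [List.mem_cons, List.not_mem_nil, or_false] at hv; rcases hv with rfl; exacts [oE1]) (by intro v hv; simp at hv) (by intro v hv; simp only [List.mem_cons, List.not_mem_nil, or_false] at hv; rcases hv with rfl | rfl; exacts [oE4, oE5])
    (by decide) closP0_4
  simpa using this

theorem closP0_5 : Subgroup.closure {v : G7 | v ∈ ([] : List G7) ∨ v ∈ [E1] ∨ v ∈ [E14] ∨ v ∈ [E7]} = ⊤ := by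
  have h0 : E1 ∈ Subgroup.closure {v : G7 | v ∈ ([] : List G7) ∨ v ∈ [E1] ∨ v ∈ [E14] ∨ v ∈ [E7]} := Subgroup.subset_closure (by simp)
  have h1 : E14 ∈ Subgroup.closure {v : G7 | v ∈ ([] : List G7) ∨ v ∈ [E1] ∨ v ∈ [E14] ∨ v ∈ [E7]} := Subgroup.subset_closure (by simp)
  have h2 : E7 ∈ Subgroup.closure {v : G7 | v ∈ ([] : List G7) ∨ v ∈ [E1] ∨ v ∈ [E14] ∨ v ∈ [E7]} := Subgroup.subset_closure (by simp)
  exact closure_top_of _ (E1) (E14) (E7) (E14 * E1)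
    h0 h1 h2 (mul_mem h1 h0)
    (ord3 (by decide) (by decide)) (ord4 (by decide) (by decide))
    (ord7 (by decide) (by decide)) (by decide) (by decide)

theorem patP0_0111 (b₂ b₃ b₄ b₇ : ℕ) :
    GenVector G7 0 (periods7 (2*b₂) (1 + 2*b₃) (1 + 2*b₄) (1 + 2*b₇)) := by
  have := master0 E0 E1 E2 E3 ([] : List G7) [E1] [E14] [E7] b₂ b₃ b₄ b₇ oE0 oE1 oE2 oE3
    (by intro v hv; simp at hv) (by intro v hv; simp only [List.mem_cons, List.not_mem_nil, or_false] at hv; rcases hv with rfl; exacts [oE1]) (by intro v hv; simp only [List.mem_cons, List.not_mem_nil, or_false] at hv; rcases hv with rfl; exacts [oE14]) (by intro v hv; simp only [List.mem_cons, List.not_mem_nil, or_false] at hv; rcases hv with rfl; exacts [oE7])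
    (by decide) closP0_5
  simpa using this

theorem closP0_6 : Subgroup.closure {v : G7 | v ∈ ([] : List G7) ∨ v ∈ [E1] ∨ v ∈ [E2] ∨ v ∈ [E17, E18]} = ⊤ := by
  have h0 : E1 ∈ Subgroup.closure {v : G7 | v ∈ ([] : List G7) ∨ v ∈ [E1] ∨ v ∈ [E2] ∨ v ∈ [E17, E18]} := Subgroup.subset_closure (by simp)
  have h1 : E2 ∈ Subgroup.closure {v : G7 | v ∈ ([] : List G7) ∨ v ∈ [E1] ∨ v ∈ [E2] ∨ v ∈ [E17, E18]} := Subgroup.subset_closure (by simp)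
  have h2 : E17 ∈ Subgroup.closure {v : G7 | v ∈ ([] : List G7) ∨ v ∈ [E1] ∨ v ∈ [E2] ∨ v ∈ [E17, E18]} := Subgroup.subset_closure (by simp)
  have h3 : E18 ∈ Subgroup.closure {v : G7 | v ∈ ([] : List G7) ∨ v ∈ [E1] ∨ v ∈ [E2] ∨ v ∈ [E17, E18]} := Subgroup.subset_closure (by simp)
  exact closure_top_of _ (E1) (E2) (E17) (E18)
    h0 h1 h2 h3
    (ord3 (by decide) (by decide)) (ord4 (by decide) (by decide))
    (ord7 (by decide) (by decide)) (by decide) (by decide)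

theorem patP0_0112 (b₂ b₃ b₄ b₇ : ℕ) :
    GenVector G7 0 (periods7 (2*b₂) (1 + 2*b₃) (1 + 2*b₄) (2 + 2*b₇)) := by
  have := master0 E0 E1 E2 E3 ([] : List G7) [E1] [E2] [E17, E18] b₂ b₃ b₄ b₇ oE0 oE1 oE2 oE3
    (by intro v hv; simp at hv) (by intro v hv; simp only [List.mem_cons, List.not_mem_nil, or_false] at hv; rcases hv with rfl; exacts [oE1]) (by intro v hv; simp only [List.mem_cons, List.not_mem_nil, or_false] at hv; rcases hv with rfl; exacts [oE2]) (by intro v hv; simp only [List.mem_cons, List.not_mem_nil, or_false] at hv; rcases hv with rfl | rfl; exacts [oE17, oE18])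
    (by decide) closP0_6
  simpa using this

theorem closP0_7 : Subgroup.closure {v : G7 | v ∈ ([] : List G7) ∨ v ∈ [E1, E1] ∨ v ∈ ([] : List G7) ∨ v ∈ [E12, E16]} = ⊤ := by
  have h0 : E1 ∈ Subgroup.closure {v : G7 | v ∈ ([] : List G7) ∨ v ∈ [E1, E1] ∨ v ∈ ([] : List G7) ∨ v ∈ [E12, E16]} := Subgroup.subset_closure (by simp)
  have h1 : E1 ∈ Subgroup.closure {v : G7 | v ∈ ([] : List G7) ∨ v ∈ [E1, E1] ∨ v ∈ ([] : List G7) ∨ v ∈ [E12, E16]} := Subgroup.subset_closure (by simp)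
  have h2 : E12 ∈ Subgroup.closure {v : G7 | v ∈ ([] : List G7) ∨ v ∈ [E1, E1] ∨ v ∈ ([] : List G7) ∨ v ∈ [E12, E16]} := Subgroup.subset_closure (by simp)
  have h3 : E16 ∈ Subgroup.closure {v : G7 | v ∈ ([] : List G7) ∨ v ∈ [E1, E1] ∨ v ∈ ([] : List G7) ∨ v ∈ [E12, E16]} := Subgroup.subset_closure (by simp)
  exact closure_top_of _ (E1) (E1 * E12) (E12) (E16)
    h1 (mul_mem h1 h2) h2 h3
    (ord3 (by decide) (by decide)) (ord4 (by decide) (by decide))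
    (ord7 (by decide) (by decide)) (by decide) (by decide)

theorem patP0_0202 (b₂ b₃ b₄ b₇ : ℕ) :
    GenVector G7 0 (periods7 (2*b₂) (2 + 2*b₃) (2*b₄) (2 + 2*b₇)) := by
  have := master0 E0 E1 E2 E3 ([] : List G7) [E1, E1] ([] : List G7) [E12, E16] b₂ b₃ b₄ b₇ oE0 oE1 oE2 oE3
    (by intro v hv; simp at hv) (by intro v hv; simp only [List.mem_cons, List.not_mem_nil, or_false] at hv; rcases hv with rfl | rfl; exacts [oE1, oE1]) (by intro v hv; simp at hv) (by intro v hv; simp only [List.mem_cons, List.not_mem_nil, or_false] at hv; rcases hv with rfl | rfl; exacts [oE12, oE16])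
    (by decide) closP0_7
  simpa using this

theorem closP0_8 : Subgroup.closure {v : G7 | v ∈ [E0] ∨ v ∈ ([] : List G7) ∨ v ∈ ([] : List G7) ∨ v ∈ [E4, E10]} = ⊤ := by
  have h0 : E0 ∈ Subgroup.closure {v : G7 | v ∈ [E0] ∨ v ∈ ([] : List G7) ∨ v ∈ ([] : List G7) ∨ v ∈ [E4, E10]} := Subgroup.subset_closure (by simp)
  have h1 : E4 ∈ Subgroup.closure {v : G7 | v ∈ [E0] ∨ v ∈ ([] : List G7) ∨ v ∈ ([] : List G7) ∨ v ∈ [E4, E10]} := Subgroup.subset_closure (by simp)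
  have h2 : E10 ∈ Subgroup.closure {v : G7 | v ∈ [E0] ∨ v ∈ ([] : List G7) ∨ v ∈ ([] : List G7) ∨ v ∈ [E4, E10]} := Subgroup.subset_closure (by simp)
  exact closure_top_of _ (E0 * E10 * E4) (E0 * E4 * E4) (E4) (E10)
    (mul_mem (mul_mem h0 h2) h1) (mul_mem (mul_mem h0 h1) h1) h1 h2
    (ord3 (by decide) (by decide)) (ord4 (by decide) (by decide))
    (ord7 (by decide) (by decide)) (by decide) (by decide)

theorem patP0_1002 (b₂ b₃ b₄ b₇ : ℕ) :
    GenVector G7 0 (periods7 (1 + 2*b₂) (2*b₃) (2*b₄) (2 + 2*b₇)) := by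
  have := master0 E0 E1 E2 E3 [E0] ([] : List G7) ([] : List G7) [E4, E10] b₂ b₃ b₄ b₇ oE0 oE1 oE2 oE3
    (by intro v hv; simp only [List.mem_cons, List.not_mem_nil, or_false] at hv; rcases hv with rfl; exacts [oE0]) (by intro v hv; simp at hv) (by intro v hv; simp at hv) (by intro v hv; simp only [List.mem_cons, List.not_mem_nil, or_false] at hv; rcases hv with rfl | rfl; exacts [oE4, oE10])
    (by decide) closP0_8
  simpa using this

theorem closP0_9 : Subgroup.closure {v : G7 | v ∈ [E0] ∨ v ∈ ([] : List G7) ∨ v ∈ [E6] ∨ v ∈ [E7]} = ⊤ := by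
  have h0 : E0 ∈ Subgroup.closure {v : G7 | v ∈ [E0] ∨ v ∈ ([] : List G7) ∨ v ∈ [E6] ∨ v ∈ [E7]} := Subgroup.subset_closure (by simp)
  have h1 : E6 ∈ Subgroup.closure {v : G7 | v ∈ [E0] ∨ v ∈ ([] : List G7) ∨ v ∈ [E6] ∨ v ∈ [E7]} := Subgroup.subset_closure (by simp)
  have h2 : E7 ∈ Subgroup.closure {v : G7 | v ∈ [E0] ∨ v ∈ ([] : List G7) ∨ v ∈ [E6] ∨ v ∈ [E7]} := Subgroup.subset_closure (by simp)
  exact closure_top_of _ (E0 * E6 * E6) (E6) (E7) (E6 * E0)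
    (mul_mem (mul_mem h0 h1) h1) h1 h2 (mul_mem h1 h0)
    (ord3 (by decide) (by decide)) (ord4 (by decide) (by decide))
    (ord7 (by decide) (by decide)) (by decide) (by decide)

theorem patP0_1011 (b₂ b₃ b₄ b₇ : ℕ) :
    GenVector G7 0 (periods7 (1 + 2*b₂) (2*b₃) (1 + 2*b₄) (1 + 2*b₇)) := by
  have := master0 E0 E1 E2 E3 [E0] ([] : List G7) [E6] [E7] b₂ b₃ b₄ b₇ oE0 oE1 oE2 oE3
    (by intro v hv; simp only [List.mem_cons, List.not_mem_nil, or_false] at hv; rcases hv with rfl; exacts [oE0]) (by intro v hv; simp at hv) (by intro v hv; simp only [List.mem_cons, List.not_mem_nil, or_false] at hv; rcases hv with rfl; exacts [oE6]) (by intro v hv; simp only [List.mem_cons, List.not_mem_nil, or_false] at hv; rcases hv with rfl; exacts [oE7])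
    (by decide) closP0_9
  simpa using this

theorem closP0_10 : Subgroup.closure {v : G7 | v ∈ [E0] ∨ v ∈ ([] : List G7) ∨ v ∈ [E2] ∨ v ∈ [E19, E20]} = ⊤ := by
  have h0 : E0 ∈ Subgroup.closure {v : G7 | v ∈ [E0] ∨ v ∈ ([] : List G7) ∨ v ∈ [E2] ∨ v ∈ [E19, E20]} := Subgroup.subset_closure (by simp)
  have h1 : E2 ∈ Subgroup.closure {v : G7 | v ∈ [E0] ∨ v ∈ ([] : List G7) ∨ v ∈ [E2] ∨ v ∈ [E19, E20]} := Subgroup.subset_closure (by simp)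
  have h2 : E19 ∈ Subgroup.closure {v : G7 | v ∈ [E0] ∨ v ∈ ([] : List G7) ∨ v ∈ [E2] ∨ v ∈ [E19, E20]} := Subgroup.subset_closure (by simp)
  have h3 : E20 ∈ Subgroup.closure {v : G7 | v ∈ [E0] ∨ v ∈ ([] : List G7) ∨ v ∈ [E2] ∨ v ∈ [E19, E20]} := Subgroup.subset_closure (by simp)
  exact closure_top_of _ (E0 * E2) (E2) (E19) (E20)
    (mul_mem h0 h1) h1 h2 h3
    (ord3 (by decide) (by decide)) (ord4 (by decide) (by decide))
    (ord7 (by decide) (by decide)) (by decide) (by decide)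

theorem patP0_1012 (b₂ b₃ b₄ b₇ : ℕ) :
    GenVector G7 0 (periods7 (1 + 2*b₂) (2*b₃) (1 + 2*b₄) (2 + 2*b₇)) := by
  have := master0 E0 E1 E2 E3 [E0] ([] : List G7) [E2] [E19, E20] b₂ b₃ b₄ b₇ oE0 oE1 oE2 oE3
    (by intro v hv; simp only [List.mem_cons, List.not_mem_nil, or_false] at hv; rcases hv with rfl; exacts [oE0]) (by intro v hv; simp at hv) (by intro v hv; simp only [List.mem_cons, List.not_mem_nil, or_false] at hv; rcases hv with rfl; exacts [oE2]) (by intro v hv; simp only [List.mem_cons, List.not_mem_nil, or_false] at hv; rcases hv with rfl | rfl; exacts [oE19, oE20])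
    (by decide) closP0_10
  simpa using this

theorem closP0_11 : Subgroup.closure {v : G7 | v ∈ [E0] ∨ v ∈ [E1] ∨ v ∈ ([] : List G7) ∨ v ∈ [E12, E15]} = ⊤ := by
  have h0 : E0 ∈ Subgroup.closure {v : G7 | v ∈ [E0] ∨ v ∈ [E1] ∨ v ∈ ([] : List G7) ∨ v ∈ [E12, E15]} := Subgroup.subset_closure (by simp)
  have h1 : E1 ∈ Subgroup.closure {v : G7 | v ∈ [E0] ∨ v ∈ [E1] ∨ v ∈ ([] : List G7) ∨ v ∈ [E12, E15]} := Subgroup.subset_closure (by simp)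
  have h2 : E12 ∈ Subgroup.closure {v : G7 | v ∈ [E0] ∨ v ∈ [E1] ∨ v ∈ ([] : List G7) ∨ v ∈ [E12, E15]} := Subgroup.subset_closure (by simp)
  have h3 : E15 ∈ Subgroup.closure {v : G7 | v ∈ [E0] ∨ v ∈ [E1] ∨ v ∈ ([] : List G7) ∨ v ∈ [E12, E15]} := Subgroup.subset_closure (by simp)
  exact closure_top_of _ (E1) (E0 * E1) (E12) (E15)
    h1 (mul_mem h0 h1) h2 h3
    (ord3 (by decide) (by decide)) (ord4 (by decide) (by decide))
    (ord7 (by decide) (by decide)) (by decide) (by decide)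

theorem patP0_1102 (b₂ b₃ b₄ b₇ : ℕ) :
    GenVector G7 0 (periods7 (1 + 2*b₂) (1 + 2*b₃) (2*b₄) (2 + 2*b₇)) := by
  have := master0 E0 E1 E2 E3 [E0] [E1] ([] : List G7) [E12, E15] b₂ b₃ b₄ b₇ oE0 oE1 oE2 oE3
    (by intro v hv; simp only [List.mem_cons, List.not_mem_nil, or_false] at hv; rcases hv with rfl; exacts [oE0]) (by intro v hv; simp only [List.mem_cons, List.not_mem_nil, or_false] at hv; rcases hv with rfl; exacts [oE1]) (by intro v hv; simp at hv) (by intro v hv; simp only [List.mem_cons, List.not_mem_nil, or_false] at hv; rcases hv with rfl | rfl; exacts [oE12, oE15])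
    (by decide) closP0_11
  simpa using this

theorem closP0_12 : Subgroup.closure {v : G7 | v ∈ [E0] ∨ v ∈ [E1] ∨ v ∈ [E2] ∨ v ∈ [E4, E11]} = ⊤ := by
  have h0 : E0 ∈ Subgroup.closure {v : G7 | v ∈ [E0] ∨ v ∈ [E1] ∨ v ∈ [E2] ∨ v ∈ [E4, E11]} := Subgroup.subset_closure (by simp)
  have h1 : E1 ∈ Subgroup.closure {v : G7 | v ∈ [E0] ∨ v ∈ [E1] ∨ v ∈ [E2] ∨ v ∈ [E4, E11]} := Subgroup.subset_closure (by simp)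
  have h2 : E2 ∈ Subgroup.closure {v : G7 | v ∈ [E0] ∨ v ∈ [E1] ∨ v ∈ [E2] ∨ v ∈ [E4, E11]} := Subgroup.subset_closure (by simp)
  have h3 : E4 ∈ Subgroup.closure {v : G7 | v ∈ [E0] ∨ v ∈ [E1] ∨ v ∈ [E2] ∨ v ∈ [E4, E11]} := Subgroup.subset_closure (by simp)
  have h4 : E11 ∈ Subgroup.closure {v : G7 | v ∈ [E0] ∨ v ∈ [E1] ∨ v ∈ [E2] ∨ v ∈ [E4, E11]} := Subgroup.subset_closure (by simp)
  exact closure_top_of _ (E1) (E2) (E4) (E11)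
    h1 h2 h3 h4
    (ord3 (by decide) (by decide)) (ord4 (by decide) (by decide))
    (ord7 (by decide) (by decide)) (by decide) (by decide)

theorem patP0_1112 (b₂ b₃ b₄ b₇ : ℕ) :
    GenVector G7 0 (periods7 (1 + 2*b₂) (1 + 2*b₃) (1 + 2*b₄) (2 + 2*b₇)) := by
  have := master0 E0 E1 E2 E3 [E0] [E1] [E2] [E4, E11] b₂ b₃ b₄ b₇ oE0 oE1 oE2 oE3
    (by intro v hv; simp only [List.mem_cons, List.not_mem_nil, or_false] at hv; rcases hv with rfl; exacts [oE0]) (by intro v hv; simp only [List.mem_cons, List.not_mem_nil, or_false] at hv; rcases hv with rfl; exacts [oE1]) (by intro v hv; simp only [List.mem_cons, List.not_mem_nil, or_false] at hv; rcases hv with rfl; exacts [oE2]) (by intro v hv; simp only [List.mem_cons, List.not_mem_nil, or_false] at hv; rcases hv with rfl | rfl; exacts [oE4, oE11])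
    (by decide) closP0_12
  simpa using this

theorem patL1_0001 (b₂ b₃ b₄ b₇ : ℕ) :
    GenVector G7 1 (periods7 (2*b₂) (2*b₃) (2*b₄) (1 + 2*b₇)) := by
  have := master1 pA pB E0 E1 E2 E3 ([] : List G7) ([] : List G7) ([] : List G7) [E19] b₂ b₃ b₄ b₇ oE0 oE1 oE2 oE3
    (by intro v hv; simp at hv) (by intro v hv; simp at hv) (by intro v hv; simp at hv) (by intro v hv; simp only [List.mem_cons, List.not_mem_nil, or_false] at hv; rcases hv with rfl; exacts [oE19])
    (by decide) closL1
  simpa using this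

theorem patL1_0011 (b₂ b₃ b₄ b₇ : ℕ) :
    GenVector G7 1 (periods7 (2*b₂) (2*b₃) (1 + 2*b₄) (1 + 2*b₇)) := by
  have := master1 pA pB E0 E1 E2 E3 ([] : List G7) ([] : List G7) [E2] [E21] b₂ b₃ b₄ b₇ oE0 oE1 oE2 oE3
    (by intro v hv; simp at hv) (by intro v hv; simp at hv) (by intro v hv; simp only [List.mem_cons, List.not_mem_nil, or_false] at hv; rcases hv with rfl; exacts [oE2]) (by intro v hv; simp only [List.mem_cons, List.not_mem_nil, or_false] at hv; rcases hv with rfl; exacts [oE21])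
    (by decide) closL1
  simpa using this

theorem patL1_0101 (b₂ b₃ b₄ b₇ : ℕ) :
    GenVector G7 1 (periods7 (2*b₂) (1 + 2*b₃) (2*b₄) (1 + 2*b₇)) := by
  have := master1 pA pB E0 E1 E2 E3 ([] : List G7) [E22] ([] : List G7) [E10] b₂ b₃ b₄ b₇ oE0 oE1 oE2 oE3
    (by intro v hv; simp at hv) (by intro v hv; simp only [List.mem_cons, List.not_mem_nil, or_false] at hv; rcases hv with rfl; exacts [oE22]) (by intro v hv; simp at hv) (by intro v hv; simp only [List.mem_cons, List.not_mem_nil, or_false] at hv; rcases hv with rfl; exacts [oE10])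
    (by decide) closL1
  simpa using this

theorem patL1_0110 (b₂ b₃ b₄ b₇ : ℕ) :
    GenVector G7 1 (periods7 (2*b₂) (1 + 2*b₃) (1 + 2*b₄) (2*b₇)) := by
  have := master1 pA pB E0 E1 E2 E3 ([] : List G7) [E23] [E24] ([] : List G7) b₂ b₃ b₄ b₇ oE0 oE1 oE2 oE3
    (by intro v hv; simp at hv) (by intro v hv; simp only [List.mem_cons, List.not_mem_nil, or_false] at hv; rcases hv with rfl; exacts [oE23]) (by intro v hv; simp only [List.mem_cons, List.not_mem_nil, or_false] at hv; rcases hv with rfl; exacts [oE24]) (by intro v hv; simp at hv)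
    (by decide) closL1
  simpa using this

theorem patL1_0111 (b₂ b₃ b₄ b₇ : ℕ) :
    GenVector G7 1 (periods7 (2*b₂) (1 + 2*b₃) (1 + 2*b₄) (1 + 2*b₇)) := by
  have := master1 pA pB E0 E1 E2 E3 ([] : List G7) [E1] [E25] [E26] b₂ b₃ b₄ b₇ oE0 oE1 oE2 oE3
    (by intro v hv; simp at hv) (by intro v hv; simp only [List.mem_cons, List.not_mem_nil, or_false] at hv; rcases hv with rfl; exacts [oE1]) (by intro v hv; simp only [List.mem_cons, List.not_mem_nil, or_false] at hv; rcases hv with rfl; exacts [oE25]) (by intro v hv; simp only [List.mem_cons, List.not_mem_nil, or_false] at hv; rcases hv with rfl; exacts [oE26])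
    (by decide) closL1
  simpa using this

theorem patL1_0200 (b₂ b₃ b₄ b₇ : ℕ) :
    GenVector G7 1 (periods7 (2*b₂) (2 + 2*b₃) (2*b₄) (2*b₇)) := by
  have := master1 pA pB E0 E1 E2 E3 ([] : List G7) [E1, E27] ([] : List G7) ([] : List G7) b₂ b₃ b₄ b₇ oE0 oE1 oE2 oE3
    (by intro v hv; simp at hv) (by intro v hv; simp only [List.mem_cons, List.not_mem_nil, or_false] at hv; rcases hv with rfl | rfl; exacts [oE1, oE27]) (by intro v hv; simp at hv) (by intro v hv; simp at hv)
    (by decide) closL1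
  simpa using this

theorem patL1_1001 (b₂ b₃ b₄ b₇ : ℕ) :
    GenVector G7 1 (periods7 (1 + 2*b₂) (2*b₃) (2*b₄) (1 + 2*b₇)) := by
  have := master1 pA pB E0 E1 E2 E3 [E28] ([] : List G7) ([] : List G7) [E29] b₂ b₃ b₄ b₇ oE0 oE1 oE2 oE3
    (by intro v hv; simp only [List.mem_cons, List.not_mem_nil, or_false] at hv; rcases hv with rfl; exacts [oE28]) (by intro v hv; simp at hv) (by intro v hv; simp at hv) (by intro v hv; simp only [List.mem_cons, List.not_mem_nil, or_false] at hv; rcases hv with rfl; exacts [oE29])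
    (by decide) closL1
  simpa using this

theorem patL1_1010 (b₂ b₃ b₄ b₇ : ℕ) :
    GenVector G7 1 (periods7 (1 + 2*b₂) (2*b₃) (1 + 2*b₄) (2*b₇)) := by
  have := master1 pA pB E0 E1 E2 E3 [E0] ([] : List G7) [E30] ([] : List G7) b₂ b₃ b₄ b₇ oE0 oE1 oE2 oE3
    (by intro v hv; simp only [List.mem_cons, List.not_mem_nil, or_false] at hv; rcases hv with rfl; exacts [oE0]) (by intro v hv; simp at hv) (by intro v hv; simp only [List.mem_cons, List.not_mem_nil, or_false] at hv; rcases hv with rfl; exacts [oE30]) (by intro v hv; simp at hv)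
    (by decide) closL1
  simpa using this

theorem patL1_1011 (b₂ b₃ b₄ b₇ : ℕ) :
    GenVector G7 1 (periods7 (1 + 2*b₂) (2*b₃) (1 + 2*b₄) (1 + 2*b₇)) := by
  have := master1 pA pB E0 E1 E2 E3 [E0] ([] : List G7) [E31] [E32] b₂ b₃ b₄ b₇ oE0 oE1 oE2 oE3
    (by intro v hv; simp only [List.mem_cons, List.not_mem_nil, or_false] at hv; rcases hv with rfl; exacts [oE0]) (by intro v hv; simp at hv) (by intro v hv; simp only [List.mem_cons, List.not_mem_nil, or_false] at hv; rcases hv with rfl; exacts [oE31]) (by intro v hv; simp only [List.mem_cons, List.not_mem_nil, or_false] at hv; rcases hv with rfl; exacts [oE32])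
    (by decide) closL1
  simpa using this

theorem patL1_1100 (b₂ b₃ b₄ b₇ : ℕ) :
    GenVector G7 1 (periods7 (1 + 2*b₂) (1 + 2*b₃) (2*b₄) (2*b₇)) := by
  have := master1 pA pB E0 E1 E2 E3 [E33] [E34] ([] : List G7) ([] : List G7) b₂ b₃ b₄ b₇ oE0 oE1 oE2 oE3
    (by intro v hv; simp only [List.mem_cons, List.not_mem_nil, or_false] at hv; rcases hv with rfl; exacts [oE33]) (by intro v hv; simp only [List.mem_cons, List.not_mem_nil, or_false] at hv; rcases hv with rfl; exacts [oE34]) (by intro v hv; simp at hv) (by intro v hv; simp at hv)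
    (by decide) closL1
  simpa using this

theorem patL1_1101 (b₂ b₃ b₄ b₇ : ℕ) :
    GenVector G7 1 (periods7 (1 + 2*b₂) (1 + 2*b₃) (2*b₄) (1 + 2*b₇)) := by
  have := master1 pA pB E0 E1 E2 E3 [E0] [E35] ([] : List G7) [E36] b₂ b₃ b₄ b₇ oE0 oE1 oE2 oE3
    (by intro v hv; simp only [List.mem_cons, List.not_mem_nil, or_false] at hv; rcases hv with rfl; exacts [oE0]) (by intro v hv; simp only [List.mem_cons, List.not_mem_nil, or_false] at hv; rcases hv with rfl; exacts [oE35]) (by intro v hv; simp at hv) (by intro v hv; simp only [List.mem_cons, List.not_mem_nil, or_false] at hv; rcases hv with rfl; exacts [oE36])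
    (by decide) closL1
  simpa using this

theorem patL1_1110 (b₂ b₃ b₄ b₇ : ℕ) :
    GenVector G7 1 (periods7 (1 + 2*b₂) (1 + 2*b₃) (1 + 2*b₄) (2*b₇)) := by
  have := master1 pA pB E0 E1 E2 E3 [E0] [E37] [E38] ([] : List G7) b₂ b₃ b₄ b₇ oE0 oE1 oE2 oE3
    (by intro v hv; simp only [List.mem_cons, List.not_mem_nil, or_false] at hv; rcases hv with rfl; exacts [oE0]) (by intro v hv; simp only [List.mem_cons, List.not_mem_nil, or_false] at hv; rcases hv with rfl; exacts [oE37]) (by intro v hv; simp only [List.mem_cons, List.not_mem_nil, or_false] at hv; rcases hv with rfl; exacts [oE38]) (by intro v hv; simp at hv)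
    (by decide) closL1
  simpa using this

theorem patL1_2010 (b₂ b₃ b₄ b₇ : ℕ) :
    GenVector G7 1 (periods7 (2 + 2*b₂) (2*b₃) (1 + 2*b₄) (2*b₇)) := by
  have := master1 pA pB E0 E1 E2 E3 [E0, E28] ([] : List G7) [E6] ([] : List G7) b₂ b₃ b₄ b₇ oE0 oE1 oE2 oE3
    (by intro v hv; simp only [List.mem_cons, List.not_mem_nil, or_false] at hv; rcases hv with rfl | rfl; exacts [oE0, oE28]) (by intro v hv; simp at hv) (by intro v hv; simp only [List.mem_cons, List.not_mem_nil, or_false] at hv; rcases hv with rfl; exacts [oE6]) (by intro v hv; simp at hv)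
    (by decide) closL1
  simpa using this

theorem patL1_2100 (b₂ b₃ b₄ b₇ : ℕ) :
    GenVector G7 1 (periods7 (2 + 2*b₂) (1 + 2*b₃) (2*b₄) (2*b₇)) := by
  have := master1 pA pB E0 E1 E2 E3 [E0, E33] [E39] ([] : List G7) ([] : List G7) b₂ b₃ b₄ b₇ oE0 oE1 oE2 oE3
    (by intro v hv; simp only [List.mem_cons, List.not_mem_nil, or_false] at hv; rcases hv with rfl | rfl; exacts [oE0, oE33]) (by intro v hv; simp only [List.mem_cons, List.not_mem_nil, or_false] at hv; rcases hv with rfl; exacts [oE39]) (by intro v hv; simp at hv) (by intro v hv; simp at hv)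
    (by decide) closL1
  simpa using this

theorem patL1_3000 (b₂ b₃ b₄ b₇ : ℕ) :
    GenVector G7 1 (periods7 (3 + 2*b₂) (2*b₃) (2*b₄) (2*b₇)) := by
  have := master1 pA pB E0 E1 E2 E3 [E0, E40, E41] ([] : List G7) ([] : List G7) ([] : List G7) b₂ b₃ b₄ b₇ oE0 oE1 oE2 oE3
    (by intro v hv; simp only [List.mem_cons, List.not_mem_nil, or_false] at hv; rcases hv with rfl | rfl | rfl; exacts [oE0, oE40, oE41]) (by intro v hv; simp at hv) (by intro v hv; simp at hv) (by intro v hv; simp at hv)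
    (by decide) closL1
  simpa using this

theorem ne_sig {h a₂ a₃ a₄ a₇ : ℕ} (hne : a₃ + a₄ + a₇ ≠ 0) :
    (h, a₂, a₃, a₄, a₇) ≠ (1, 1, 0, 0, 0) := by
  intro hE
  rw [Prod.mk.injEq, Prod.mk.injEq, Prod.mk.injEq, Prod.mk.injEq] at hE
  omega

/-- The stable upper genus of `PSL(2, F7)` is `399`: no signature realizes genus `398`,
while every genus `g >= 399` is realized by a generating vector of `PSL(2, F7)`. -/
theorem stable_upper_genus_PSL2_F7 :
    (¬ ∃ h a₂ a₃ a₄ a₇ : ℕ,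
        (398 : ℤ) = 1 + 168 * ((h : ℤ) - 1) + 42 * a₂ + 56 * a₃ + 63 * a₄ + 72 * a₇) ∧
    (∀ g : ℤ, 399 ≤ g → ∃ h a₂ a₃ a₄ a₇ : ℕ,
        (h, a₂, a₃, a₄, a₇) ≠ (1, 1, 0, 0, 0) ∧
        g = 1 + 168 * ((h : ℤ) - 1) + 42 * a₂ + 56 * a₃ + 63 * a₄ + 72 * a₇ ∧
        GenVector (Matrix.ProjectiveSpecialLinearGroup (Fin 2) (ZMod 7)) h
          (periods7 a₂ a₃ a₄ a₇)) := by
  constructor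
  · rintro ⟨h, a₂, a₃, a₄, a₇, heq⟩
    omega
  · intro g hg
    obtain ⟨k, hk⟩ : ∃ k : ℕ, g = 399 + (k : ℤ) := ⟨(g - 399).toNat, by omega⟩
    obtain ⟨q, r, hr, hqr⟩ : ∃ q r : ℕ, r < 84 ∧ k = 84 * q + r :=
      ⟨k / 84, k % 84, Nat.mod_lt _ (by norm_num), by omega⟩
    interval_cases r
    · exact ⟨1, 2*(0 + q), 1 + 2*0, 2*1, 1 + 2*1, ne_sig (by omega), by push_cast; omega, patL1_0101 (0 + q) 0 1 1⟩
    · exact ⟨1, 2*(2 + q), 1 + 2*1, 1 + 2*0, 2*0, ne_sig (by omega), by push_cast; omega, patL1_0110 (2 + q) 1 0 0⟩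
    · exact ⟨1, 2*(0 + q), 2 + 2*0, 2*0, 2*2, ne_sig (by omega), by push_cast; omega, patL1_0200 (0 + q) 0 0 2⟩
    · exact ⟨1, 2*(1 + q), 1 + 2*0, 1 + 2*1, 1 + 2*0, ne_sig (by omega), by push_cast; omega, patL1_0111 (1 + q) 0 1 0⟩
    · exact ⟨1, 1 + 2*(0 + q), 2*0, 2*0, 1 + 2*2, ne_sig (by omega), by push_cast; omega, patL1_1001 (0 + q) 0 0 2⟩
    · exact ⟨1, 2 + 2*(0 + q), 2*1, 1 + 2*0, 2*1, ne_sig (by omega), by push_cast; omega, patL1_2010 (0 + q) 1 0 1⟩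
    · exact ⟨0, 2*(1 + q), 1 + 2*0, 2*0, 2 + 2*2, ne_sig (by omega), by push_cast; omega, patP0_0102 (1 + q) 0 0 2⟩
    · exact ⟨1, 2*(0 + q), 2*0, 1 + 2*1, 1 + 2*1, ne_sig (by omega), by push_cast; omega, patL1_0011 (0 + q) 0 1 1⟩
    · exact ⟨1, 2*(2 + q), 2 + 2*0, 2*1, 2*0, ne_sig (by omega), by push_cast; omega, patL1_0200 (2 + q) 0 1 0⟩
    · exact ⟨1, 2*(0 + q), 1 + 2*0, 1 + 2*0, 2*2, ne_sig (by omega), by push_cast; omega, patL1_0110 (0 + q) 0 0 2⟩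
    · exact ⟨1, 2*(4 + q), 2*0, 2*0, 1 + 2*0, ne_sig (by omega), by push_cast; omega, patL1_0001 (4 + q) 0 0 0⟩
    · exact ⟨0, 1 + 2*(0 + q), 2*1, 1 + 2*0, 1 + 2*2, ne_sig (by omega), by push_cast; omega, patP0_1011 (0 + q) 1 0 2⟩
    · exact ⟨1, 1 + 2*(2 + q), 1 + 2*0, 2*0, 2*1, ne_sig (by omega), by push_cast; omega, patL1_1100 (2 + q) 0 0 1⟩
    · exact ⟨0, 2*(1 + q), 2*0, 1 + 2*0, 2 + 2*2, ne_sig (by omega), by push_cast; omega, patP0_0012 (1 + q) 0 0 2⟩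
    · exact ⟨1, 2*(1 + q), 2*1, 2*0, 1 + 2*1, ne_sig (by omega), by push_cast; omega, patL1_0001 (1 + q) 1 0 1⟩
    · exact ⟨1, 2*(2 + q), 1 + 2*0, 1 + 2*1, 2*0, ne_sig (by omega), by push_cast; omega, patL1_0110 (2 + q) 0 1 0⟩
    · exact ⟨1, 3 + 2*(0 + q), 2*0, 2*0, 2*2, ne_sig (by omega), by push_cast; omega, patL1_3000 (0 + q) 0 0 2⟩
    · exact ⟨1, 2*(2 + q), 2*1, 1 + 2*0, 1 + 2*0, ne_sig (by omega), by push_cast; omega, patL1_0011 (2 + q) 1 0 0⟩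
    · exact ⟨1, 2*(0 + q), 1 + 2*0, 2*0, 1 + 2*2, ne_sig (by omega), by push_cast; omega, patL1_0101 (0 + q) 0 0 2⟩
    · exact ⟨1, 1 + 2*(2 + q), 2*0, 1 + 2*0, 2*1, ne_sig (by omega), by push_cast; omega, patL1_1010 (2 + q) 0 0 1⟩
    · exact ⟨0, 1 + 2*(0 + q), 2*1, 2*0, 2 + 2*2, ne_sig (by omega), by push_cast; omega, patP0_1002 (0 + q) 1 0 2⟩
    · exact ⟨1, 2*(1 + q), 1 + 2*0, 1 + 2*0, 1 + 2*1, ne_sig (by omega), by push_cast; omega, patL1_0111 (1 + q) 0 0 1⟩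
    · exact ⟨1, 2*(1 + q), 2 + 2*2, 2*0, 2*0, ne_sig (by omega), by push_cast; omega, patL1_0200 (1 + q) 2 0 0⟩
    · exact ⟨0, 2*(0 + q), 2*1, 1 + 2*1, 2 + 2*1, ne_sig (by omega), by push_cast; omega, patP0_0012 (0 + q) 1 1 1⟩
    · exact ⟨1, 2*(0 + q), 2*2, 2*1, 1 + 2*0, ne_sig (by omega), by push_cast; omega, patL1_0001 (0 + q) 2 1 0⟩
    · exact ⟨1, 2*(0 + q), 2*0, 1 + 2*0, 1 + 2*2, ne_sig (by omega), by push_cast; omega, patL1_0011 (0 + q) 0 0 2⟩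
    · exact ⟨1, 2*(2 + q), 2 + 2*0, 2*0, 2*1, ne_sig (by omega), by push_cast; omega, patL1_0200 (2 + q) 0 0 1⟩
    · exact ⟨0, 1 + 2*(0 + q), 1 + 2*0, 1 + 2*0, 2 + 2*2, ne_sig (by omega), by push_cast; omega, patP0_1112 (0 + q) 0 0 2⟩
    · exact ⟨1, 2*(1 + q), 2*0, 2*1, 1 + 2*1, ne_sig (by omega), by push_cast; omega, patL1_0001 (1 + q) 0 1 1⟩
    · exact ⟨1, 2*(1 + q), 1 + 2*2, 1 + 2*0, 2*0, ne_sig (by omega), by push_cast; omega, patL1_0110 (1 + q) 2 0 0⟩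
    · exact ⟨1, 2 + 2*(0 + q), 1 + 2*0, 2*0, 2*2, ne_sig (by omega), by push_cast; omega, patL1_2100 (0 + q) 0 0 2⟩
    · exact ⟨1, 2*(2 + q), 2*0, 1 + 2*1, 1 + 2*0, ne_sig (by omega), by push_cast; omega, patL1_0011 (2 + q) 0 1 0⟩
    · exact ⟨0, 2*(0 + q), 2*1, 2*1, 3 + 2*1, ne_sig (by omega), by push_cast; omega, patP0_0003 (0 + q) 1 1 1⟩
    · exact ⟨1, 2*(2 + q), 1 + 2*0, 1 + 2*0, 2*1, ne_sig (by omega), by push_cast; omega, patL1_0110 (2 + q) 0 0 1⟩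
    · exact ⟨0, 2*(0 + q), 1 + 2*1, 2*0, 2 + 2*2, ne_sig (by omega), by push_cast; omega, patP0_0102 (0 + q) 1 0 2⟩
    · exact ⟨1, 1 + 2*(0 + q), 2*1, 1 + 2*0, 1 + 2*1, ne_sig (by omega), by push_cast; omega, patL1_1011 (0 + q) 1 0 1⟩
    · exact ⟨1, 2*(1 + q), 2 + 2*1, 2*1, 2*0, ne_sig (by omega), by push_cast; omega, patL1_0200 (1 + q) 1 1 0⟩
    · exact ⟨1, 2 + 2*(0 + q), 2*0, 1 + 2*0, 2*2, ne_sig (by omega), by push_cast; omega, patL1_2010 (0 + q) 0 0 2⟩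
    · exact ⟨1, 2*(3 + q), 2*1, 2*0, 1 + 2*0, ne_sig (by omega), by push_cast; omega, patL1_0001 (3 + q) 1 0 0⟩
    · exact ⟨0, 2*(0 + q), 1 + 2*0, 1 + 2*1, 1 + 2*2, ne_sig (by omega), by push_cast; omega, patP0_0111 (0 + q) 0 1 2⟩
    · exact ⟨1, 1 + 2*(1 + q), 1 + 2*1, 2*0, 2*1, ne_sig (by omega), by push_cast; omega, patL1_1100 (1 + q) 1 0 1⟩
    · exact ⟨0, 2*(0 + q), 2*1, 1 + 2*0, 2 + 2*2, ne_sig (by omega), by push_cast; omega, patP0_0012 (0 + q) 1 0 2⟩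
    · exact ⟨1, 2*(0 + q), 2*2, 2*0, 1 + 2*1, ne_sig (by omega), by push_cast; omega, patL1_0001 (0 + q) 2 0 1⟩
    · exact ⟨1, 2*(1 + q), 1 + 2*1, 1 + 2*1, 2*0, ne_sig (by omega), by push_cast; omega, patL1_0110 (1 + q) 1 1 0⟩
    · exact ⟨0, 1 + 2*(0 + q), 1 + 2*2, 2*0, 2 + 2*1, ne_sig (by omega), by push_cast; omega, patP0_1102 (0 + q) 2 0 1⟩
    · exact ⟨1, 2*(1 + q), 2*2, 1 + 2*0, 1 + 2*0, ne_sig (by omega), by push_cast; omega, patL1_0011 (1 + q) 2 0 0⟩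
    · exact ⟨1, 2*(1 + q), 2*0, 2*0, 1 + 2*2, ne_sig (by omega), by push_cast; omega, patL1_0001 (1 + q) 0 0 2⟩
    · exact ⟨1, 1 + 2*(1 + q), 2*1, 1 + 2*0, 2*1, ne_sig (by omega), by push_cast; omega, patL1_1010 (1 + q) 1 0 1⟩
    · exact ⟨0, 2*(0 + q), 1 + 2*0, 2*1, 2 + 2*2, ne_sig (by omega), by push_cast; omega, patP0_0102 (0 + q) 0 1 2⟩
    · exact ⟨1, 2*(2 + q), 2*0, 1 + 2*0, 1 + 2*1, ne_sig (by omega), by push_cast; omega, patL1_0011 (2 + q) 0 0 1⟩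
    · exact ⟨1, 2*(4 + q), 2 + 2*0, 2*0, 2*0, ne_sig (by omega), by push_cast; omega, patL1_0200 (4 + q) 0 0 0⟩
    · exact ⟨1, 1 + 2*(0 + q), 1 + 2*0, 1 + 2*0, 2*2, ne_sig (by omega), by push_cast; omega, patL1_1110 (0 + q) 0 0 2⟩
    · exact ⟨1, 2*(3 + q), 2*0, 2*1, 1 + 2*0, ne_sig (by omega), by push_cast; omega, patL1_0001 (3 + q) 0 1 0⟩
    · exact ⟨0, 2*(1 + q), 2*1, 1 + 2*0, 3 + 2*1, ne_sig (by omega), by push_cast; omega, patP0_0013 (1 + q) 1 0 1⟩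
    · exact ⟨1, 2*(1 + q), 2 + 2*1, 2*0, 2*1, ne_sig (by omega), by push_cast; omega, patL1_0200 (1 + q) 1 0 1⟩
    · exact ⟨0, 2*(0 + q), 2*0, 1 + 2*1, 2 + 2*2, ne_sig (by omega), by push_cast; omega, patP0_0012 (0 + q) 0 1 2⟩
    · exact ⟨1, 2*(0 + q), 2*1, 2*1, 1 + 2*1, ne_sig (by omega), by push_cast; omega, patL1_0001 (0 + q) 1 1 1⟩
    · exact ⟨1, 2*(4 + q), 1 + 2*0, 1 + 2*0, 2*0, ne_sig (by omega), by push_cast; omega, patL1_0110 (4 + q) 0 0 0⟩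
    · exact ⟨0, 2*(0 + q), 2 + 2*2, 2*0, 2 + 2*1, ne_sig (by omega), by push_cast; omega, patP0_0202 (0 + q) 2 0 1⟩
    · exact ⟨1, 2*(1 + q), 2*1, 1 + 2*1, 1 + 2*0, ne_sig (by omega), by push_cast; omega, patL1_0011 (1 + q) 1 1 0⟩
    · exact ⟨1, 1 + 2*(0 + q), 1 + 2*0, 2*0, 1 + 2*2, ne_sig (by omega), by push_cast; omega, patL1_1101 (0 + q) 0 0 2⟩
    · exact ⟨1, 2*(1 + q), 1 + 2*1, 1 + 2*0, 2*1, ne_sig (by omega), by push_cast; omega, patL1_0110 (1 + q) 1 0 1⟩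
    · exact ⟨0, 2*(1 + q), 2 + 2*0, 2*0, 2 + 2*2, ne_sig (by omega), by push_cast; omega, patP0_0202 (1 + q) 0 0 2⟩
    · exact ⟨1, 2*(0 + q), 1 + 2*0, 1 + 2*1, 1 + 2*1, ne_sig (by omega), by push_cast; omega, patL1_0111 (0 + q) 0 1 1⟩
    · exact ⟨1, 2*(0 + q), 2 + 2*2, 2*1, 2*0, ne_sig (by omega), by push_cast; omega, patL1_0200 (0 + q) 2 1 0⟩
    · exact ⟨0, 2*(0 + q), 1 + 2*2, 1 + 2*0, 2 + 2*1, ne_sig (by omega), by push_cast; omega, patP0_0112 (0 + q) 2 0 1⟩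
    · exact ⟨1, 2*(2 + q), 2*2, 2*0, 1 + 2*0, ne_sig (by omega), by push_cast; omega, patL1_0001 (2 + q) 2 0 0⟩
    · exact ⟨1, 1 + 2*(0 + q), 2*0, 1 + 2*0, 1 + 2*2, ne_sig (by omega), by push_cast; omega, patL1_1011 (0 + q) 0 0 2⟩
    · exact ⟨1, 2*(1 + q), 2 + 2*0, 2*1, 2*1, ne_sig (by omega), by push_cast; omega, patL1_0200 (1 + q) 0 1 1⟩
    · exact ⟨0, 2*(1 + q), 1 + 2*0, 1 + 2*0, 2 + 2*2, ne_sig (by omega), by push_cast; omega, patP0_0112 (1 + q) 0 0 2⟩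
    · exact ⟨1, 2*(3 + q), 2*0, 2*0, 1 + 2*1, ne_sig (by omega), by push_cast; omega, patL1_0001 (3 + q) 0 0 1⟩
    · exact ⟨1, 2*(0 + q), 1 + 2*2, 1 + 2*1, 2*0, ne_sig (by omega), by push_cast; omega, patL1_0110 (0 + q) 2 1 0⟩
    · exact ⟨1, 1 + 2*(1 + q), 1 + 2*0, 2*0, 2*2, ne_sig (by omega), by push_cast; omega, patL1_1100 (1 + q) 0 0 2⟩
    · exact ⟨1, 2*(4 + q), 2*0, 1 + 2*0, 1 + 2*0, ne_sig (by omega), by push_cast; omega, patL1_0011 (4 + q) 0 0 0⟩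
    · exact ⟨1, 2*(0 + q), 2*1, 2*0, 1 + 2*2, ne_sig (by omega), by push_cast; omega, patL1_0001 (0 + q) 1 0 2⟩
    · exact ⟨1, 2*(1 + q), 1 + 2*0, 1 + 2*1, 2*1, ne_sig (by omega), by push_cast; omega, patL1_0110 (1 + q) 0 1 1⟩
    · exact ⟨0, 1 + 2*(0 + q), 1 + 2*1, 2*0, 2 + 2*2, ne_sig (by omega), by push_cast; omega, patP0_1102 (0 + q) 1 0 2⟩
    · exact ⟨1, 2*(1 + q), 2*1, 1 + 2*0, 1 + 2*1, ne_sig (by omega), by push_cast; omega, patL1_0011 (1 + q) 1 0 1⟩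
    · exact ⟨1, 2*(3 + q), 2 + 2*1, 2*0, 2*0, ne_sig (by omega), by push_cast; omega, patL1_0200 (3 + q) 1 0 0⟩
    · exact ⟨1, 1 + 2*(1 + q), 2*0, 1 + 2*0, 2*2, ne_sig (by omega), by push_cast; omega, patL1_1010 (1 + q) 0 0 2⟩
    · exact ⟨1, 2*(2 + q), 2*1, 2*1, 1 + 2*0, ne_sig (by omega), by push_cast; omega, patL1_0001 (2 + q) 1 1 0⟩
    · exact ⟨1, 2*(0 + q), 1 + 2*0, 1 + 2*0, 1 + 2*2, ne_sig (by omega), by push_cast; omega, patL1_0111 (0 + q) 0 0 2⟩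
    · exact ⟨1, 2*(0 + q), 2 + 2*2, 2*0, 2*1, ne_sig (by omega), by push_cast; omega, patL1_0200 (0 + q) 2 0 1⟩
    · exact ⟨0, 1 + 2*(0 + q), 2*1, 1 + 2*0, 2 + 2*2, ne_sig (by omega), by push_cast; omega, patP0_1012 (0 + q) 1 0 2⟩
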